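/- Let R : ℝ^N → ℝ be twice continuously differentiable and let π : ℝ^N → ℝ be a positive, twice continuously differentiable probability density. Define the drift f(α) = (β/2 · π(α)² · ∇R(α)) + π(α) · ∇π(α) and the diffusion coefficient σ(α) = π(α)·I_N. Then the Gibbs density p(α) = Z⁻¹ exp(β R(α)) (assuming the normalizing constant Z = ∫ exp(βR) is finite) satisfies the stationary Fokker–Planck equation (1/2)·Tr[∇²(σσᵀ p)](α) − div(f p)(α) = 0 for all α. -/

import Mathlib

open MeasureTheory Real

/-- Partial derivative of `f : ℝ^N → ℝ` in the `i`-th coordinate direction. -/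
noncomputable def pderiv' {N : ℕ} (i : Fin N) (f : (Fin N → ℝ) → ℝ) (x : Fin N → ℝ) : ℝ :=
  fderiv ℝ f x (Pi.single i 1)

/-- The Gibbs density `p(α) = Z⁻¹ exp(β R(α))` satisfies the stationary Fokker–Planck
equation `(1/2)·Tr[∇²(σσᵀ p)](α) − div(f p)(α) = 0` for the generalized Langevin diffusion
with drift `f(α) = (β/2)π(α)²∇R(α) + π(α)∇π(α)` and diffusion coefficient `σ(α) = π(α)·I_N`. -/
theorem stmt0 {N : ℕ} (hN : 1 ≤ N) (β : ℝ) (hβ : 0 < β)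
    (R dens : (Fin N → ℝ) → ℝ)
    (hR : ContDiff ℝ 2 R) (hdens : ContDiff ℝ 2 dens)
    (hpos : ∀ x, 0 < dens x)
    (hprob : ∫ x, dens x = 1)
    (hZfin : Integrable (fun x => Real.exp (β * R x)))
    (Z : ℝ) (hZ : Z = ∫ x, Real.exp (β * R x))
    (p : (Fin N → ℝ) → ℝ) (hp : p = fun α => Z⁻¹ * Real.exp (β * R α))
    (f : Fin N → (Fin N → ℝ) → ℝ)
    (hf : ∀ i α, f i α =
      β / 2 * (dens α) ^ 2 * pderiv' i R α + dens α * pderiv' i dens α) :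
    ∀ α, (1 / 2) * (∑ i, pderiv' i (fun x => pderiv' i (fun y => (dens y) ^ 2 * p y) x) α)
        - (∑ i, pderiv' i (fun x => f i x * p x) α) = 0 := by
  intro α
  -- Key pointwise identity: ∂ᵢ(dens² p) = 2 f i p
  have hkey : ∀ i : Fin N, (fun x => pderiv' i (fun y => (dens y) ^ 2 * p y) x)
      = fun x => 2 * (f i x * p x) := by
    intro i
    funext x
    have hRd : DifferentiableAt ℝ R x := (hR.differentiable two_ne_zero x)
    have hdd : DifferentiableAt ℝ dens x := (hdens.differentiable two_ne_zero x)
    have hR' : HasFDerivAt R (fderiv ℝ R x) x := hRd.hasFDerivAt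
    have hd' : HasFDerivAt dens (fderiv ℝ dens x) x := hdd.hasFDerivAt
    have hd2 : HasFDerivAt (fun y => (dens y) ^ 2)
        (dens x • fderiv ℝ dens x + dens x • fderiv ℝ dens x) x := by
      simpa only [sq, Pi.mul_def] using hd'.mul hd'
    have hβR : HasFDerivAt (fun y => β * R y) (β • fderiv ℝ R x) x := hR'.const_mul β
    have hexp : HasFDerivAt (fun y => Real.exp (β * R y))
        (Real.exp (β * R x) • (β • fderiv ℝ R x)) x := hβR.exp
    have hp' : HasFDerivAt p (Z⁻¹ • (Real.exp (β * R x) • (β • fderiv ℝ R x))) x := by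
      rw [hp]; exact hexp.const_mul Z⁻¹
    have hq : HasFDerivAt (fun y => (dens y) ^ 2 * p y) _ x := hd2.mul hp'
    have := hq.fderiv
    simp only [pderiv', this]
    simp only [ContinuousLinearMap.add_apply, ContinuousLinearMap.smul_apply, smul_eq_mul]
    rw [hf i x, hp]
    simp only [pderiv']
    ring
  calc (1 / 2) * (∑ i, pderiv' i (fun x => pderiv' i (fun y => (dens y) ^ 2 * p y) x) α)
        - (∑ i, pderiv' i (fun x => f i x * p x) α)
      = (1 / 2) * (∑ i, pderiv' i (fun x => 2 * (f i x * p x)) α)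
        - (∑ i, pderiv' i (fun x => f i x * p x) α) := by
        congr 2
        exact Finset.sum_congr rfl fun i _ => by rw [hkey i]
    _ = 0 := by
        have hdiff : ∀ i : Fin N, DifferentiableAt ℝ (fun x => f i x * p x) α := by
          intro i
          have hfderivR : ContDiff ℝ 1 (fderiv ℝ R) := hR.fderiv_right (le_refl _)
          have hfderivd : ContDiff ℝ 1 (fderiv ℝ dens) := hdens.fderiv_right (le_refl _)
          have hDR : DifferentiableAt ℝ (fun x => fderiv ℝ R x (Pi.single i 1)) α :=
            (((ContinuousLinearMap.apply ℝ ℝ ((Pi.single i 1 : Fin N → ℝ))).contDiff.comp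
              hfderivR).differentiable one_ne_zero) α
          have hDd : DifferentiableAt ℝ (fun x => fderiv ℝ dens x (Pi.single i 1)) α :=
            (((ContinuousLinearMap.apply ℝ ℝ ((Pi.single i 1 : Fin N → ℝ))).contDiff.comp
              hfderivd).differentiable one_ne_zero) α
          have hdd : DifferentiableAt ℝ dens α := hdens.differentiable two_ne_zero α
          have hRd : DifferentiableAt ℝ R α := hR.differentiable two_ne_zero α
          have hpd : DifferentiableAt ℝ p α := by
            rw [hp]
            exact (((Real.differentiable_exp).differentiableAt).comp α
              (hRd.const_mul β)).const_mul Z⁻¹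
          have hfi : (fun x => f i x) = fun x =>
              β / 2 * (dens x) ^ 2 * (fderiv ℝ R x (Pi.single i 1))
                + dens x * (fderiv ℝ dens x (Pi.single i 1)) := by
            funext x; rw [hf i x]; rfl
          have : DifferentiableAt ℝ (fun x => f i x) α := by
            rw [hfi]
            exact (((differentiableAt_const _).mul (hdd.pow 2)).mul hDR).add (hdd.mul hDd)
          exact this.mul hpd
        have : ∀ i : Fin N, pderiv' i (fun x => 2 * (f i x * p x)) α
            = 2 * pderiv' i (fun x => f i x * p x) α := by
          intro i
          simp only [pderiv']
          rw [fderiv_const_mul (hdiff i)]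
          simp
        rw [Finset.sum_congr rfl fun i _ => this i, ← Finset.mul_sum]
        ring
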